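/- Let δ be a real number with 0 < δ ≤ 1/5 and let C ⊆ V be a δ-clean set with B ⊆ C, |C| > (1/δ)·|B|, and |E⁺(B, C \ B)| ≥ |E⁻(B, C \ B)|. Then the number of negative edges with both endpoints in C is at most 3·m(OPT_B). -/

import Mathlib

open scoped Classical

/-- A signed graph: a finite vertex set with disjoint sets of positive and
negative edges (unordered pairs of distinct vertices). -/
structure SignedGraph (V : Type*) [Fintype V] [DecidableEq V] where
  pos : Finset (Sym2 V)
  neg : Finset (Sym2 V)
  pos_not_diag : ∀ e ∈ pos, ¬ e.IsDiag
  neg_not_diag : ∀ e ∈ neg, ¬ e.IsDiag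
  disjoint_pos_neg : Disjoint pos neg

namespace SignedGraph

variable {V : Type*} [Fintype V] [DecidableEq V]

def posAdj (G : SignedGraph V) (u v : V) : Prop := s(u, v) ∈ G.pos

def negAdj (G : SignedGraph V) (u v : V) : Prop := s(u, v) ∈ G.neg

/-- Positive neighbourhood `N⁺(v)`. -/
noncomputable def posNbr (G : SignedGraph V) (v : V) : Finset V :=
  Finset.univ.filter (fun u => G.posAdj v u)

/-- Negative neighbourhood `N⁻(v)`. -/
noncomputable def negNbr (G : SignedGraph V) (v : V) : Finset V :=
  Finset.univ.filter (fun u => G.negAdj v u)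

/-- Closed positive neighbourhood `N⁺[v] = N⁺(v) ∪ {v}`. -/
noncomputable def posNbrCl (G : SignedGraph V) (v : V) : Finset V :=
  insert v (G.posNbr v)

/-- `N⁺(B)`: the set of good vertices having a positive edge to some bad vertex. -/
noncomputable def posNbrSet (G : SignedGraph V) (B : Finset V) : Finset V :=
  Finset.univ.filter (fun v => v ∉ B ∧ ∃ u ∈ B, G.posAdj v u)

/-- `E⁺(X, Y)`: positive edges with one endpoint in `X` and the other in `Y`. -/
noncomputable def Eplus (G : SignedGraph V) (X Y : Finset V) : Finset (Sym2 V) :=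
  G.pos.filter (fun e => ∃ u ∈ X, ∃ v ∈ Y, e = s(u, v))

/-- `E⁻(X, Y)`: negative edges with one endpoint in `X` and the other in `Y`. -/
noncomputable def Eminus (G : SignedGraph V) (X Y : Finset V) : Finset (Sym2 V) :=
  G.neg.filter (fun e => ∃ u ∈ X, ∃ v ∈ Y, e = s(u, v))

/-- A clustering of `V`: a partition of `V` into nonempty parts. -/
def IsClustering (P : Finset (Finset V)) : Prop :=
  (∀ C ∈ P, C.Nonempty) ∧
  (∀ C ∈ P, ∀ C' ∈ P, C ≠ C' → Disjoint C C') ∧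
  ∀ v : V, ∃ C ∈ P, v ∈ C

/-- `u` and `v` lie in the same cluster of `P`. -/
def SameCluster (P : Finset (Finset V)) (u v : V) : Prop :=
  ∃ C ∈ P, u ∈ C ∧ v ∈ C

/-- `m(𝒞)`: number of mistakes of a clustering: negative edges within a
cluster plus positive edges between clusters. -/
noncomputable def mistakes (G : SignedGraph V) (P : Finset (Finset V)) : ℕ :=
  (G.neg.filter (fun e => ∃ u v : V, e = s(u, v) ∧ SameCluster P u v)).card +
  (G.pos.filter (fun e => ∃ u v : V, e = s(u, v) ∧ ¬ SameCluster P u v)).card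

/-- `m(OPT_B)`: minimum number of mistakes over clusterings in which `B` is
contained in a single cluster. -/
noncomputable def mOptB (G : SignedGraph V) (B : Finset V) : ℕ :=
  sInf {m : ℕ | ∃ P : Finset (Finset V),
    IsClustering P ∧ (∃ C ∈ P, B ⊆ C) ∧ m = G.mistakes P}

/-- A good vertex `v` is `δ`-good w.r.t. `C`. -/
def deltaGood (G : SignedGraph V) (δ : ℝ) (v : V) (C : Finset V) : Prop :=
  ((G.negNbr v ∩ C).card : ℝ) ≤ δ * C.card ∧
  ((G.posNbr v \ C).card : ℝ) ≤ δ * C.card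

/-- The set `B` of bad vertices is `δ`-good w.r.t. `C ⊇ B`. -/
def deltaGoodB (G : SignedGraph V) (δ : ℝ) (B C : Finset V) : Prop :=
  ((G.Eminus B (C \ B)).card : ℝ) ≤ δ * B.card * C.card ∧
  ((G.Eplus B Cᶜ).card : ℝ) ≤ δ * B.card * C.card

/-- `C` is `δ`-clean (w.r.t. the set `B` of bad vertices): every good vertex of
`C` is `δ`-good w.r.t. `C`, and if `B ⊆ C` then `B` is `δ`-good w.r.t. `C`. -/
def deltaClean (G : SignedGraph V) (δ : ℝ) (B C : Finset V) : Prop :=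
  (∀ v ∈ C, v ∉ B → G.deltaGood δ v C) ∧ (B ⊆ C → G.deltaGoodB δ B C)

/-- The structural assumptions on the signed graph w.r.t. the set `B` of bad
vertices: every pair of distinct good vertices is a positive or negative edge,
every pair of distinct bad vertices is a positive edge, and for each good
vertex the edges joining it to `B` are all positive or all negative. -/
def GoodBadStructure (G : SignedGraph V) (B : Finset V) : Prop :=
  (∀ u v : V, u ∉ B → v ∉ B → u ≠ v → G.posAdj u v ∨ G.negAdj u v) ∧
  (∀ u v : V, u ∈ B → v ∈ B → u ≠ v → G.posAdj u v) ∧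
  (∀ v : V, v ∉ B → (∀ u ∈ B, ¬ G.negAdj v u) ∨ (∀ u ∈ B, ¬ G.posAdj v u))

end SignedGraph

set_option linter.unusedSectionVars false

section Helpers
variable {V : Type*} [Fintype V] [DecidableEq V]

private lemma forall_mem_sym2_iff {C : Finset V} {u v : V} :
    (∀ x ∈ s(u,v), x ∈ C) ↔ u ∈ C ∧ v ∈ C := by
  constructor
  · intro h; exact ⟨h u (by simp), h v (by simp)⟩
  · rintro ⟨h1, h2⟩ x hx
    rcases Sym2.mem_iff.mp hx with rfl | rfl <;> assumption

private lemma card_prod_filter (X Y : Finset V) (r : V → V → Prop)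
    [inst : ∀ u v, Decidable (r u v)] :
    ((X ×ˢ Y).filter (fun p => r p.1 p.2)).card
      = ∑ u ∈ X, (Y.filter (fun v => r u v)).card := by
  rw [Finset.card_eq_sum_card_fiberwise
    (f := Prod.fst) (t := X)
    (fun p hp => (Finset.mem_product.mp (Finset.mem_filter.mp hp).1).1)]
  refine Finset.sum_congr rfl fun u hu => ?_
  refine Finset.card_bij' (fun p _ => p.2) (fun v _ => (u, v)) ?_ ?_ ?_ ?_
  · intro p hp
    simp only [Finset.mem_filter, Finset.mem_product] at hp ⊢
    obtain ⟨⟨⟨_, h2⟩, h3⟩, h4⟩ := hp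
    exact ⟨h2, h4 ▸ h3⟩
  · intro v hv
    simp only [Finset.mem_filter, Finset.mem_product] at hv ⊢
    exact ⟨⟨⟨hu, hv.1⟩, hv.2⟩, trivial⟩
  · intro p hp
    simp only [Finset.mem_filter] at hp
    exact (Prod.ext_iff.mpr ⟨hp.2.symm, rfl⟩)
  · intro v hv; rfl

private lemma two_mul_card_sym2 (S : Finset (Sym2 V)) (hS : ∀ e ∈ S, ¬ e.IsDiag) :
    ((Finset.univ ×ˢ Finset.univ).filter (fun p : V × V => s(p.1, p.2) ∈ S)).card
      = 2 * S.card := by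
  rw [Finset.card_eq_sum_card_fiberwise (f := fun p : V × V => s(p.1, p.2)) (t := S)
    (s := (Finset.univ ×ˢ Finset.univ).filter (fun p : V × V => s(p.1, p.2) ∈ S))
    (fun p hp => (Finset.mem_filter.mp hp).2)]
  rw [show (2 * S.card) = ∑ _e ∈ S, 2 by rw [Finset.sum_const]; ring]
  refine Finset.sum_congr rfl fun e he => ?_
  induction e using Sym2.inductionOn with
  | hf a b =>
    have hab : a ≠ b := fun h => hS _ he (by simp [h])
    have : ((Finset.univ ×ˢ Finset.univ).filter
        (fun p : V × V => s(p.1, p.2) ∈ S)).filter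
          (fun p => s(p.1, p.2) = s(a, b)) = {(a,b), (b,a)} := by
      ext p
      simp only [Finset.mem_filter, Finset.mem_product, Finset.mem_univ, true_and,
        Finset.mem_insert, Finset.mem_singleton, Sym2.eq_iff, Prod.ext_iff]
      constructor
      · rintro ⟨_, (⟨rfl, rfl⟩ | ⟨rfl, rfl⟩)⟩
        · exact Or.inl ⟨rfl, rfl⟩
        · exact Or.inr ⟨rfl, rfl⟩
      · rintro (⟨h1, h2⟩ | ⟨h1, h2⟩) <;> cases p <;> subst h1 <;> subst h2
        · exact ⟨he, Or.inl ⟨rfl, rfl⟩⟩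
        · exact ⟨by rwa [Sym2.eq_swap], Or.inr ⟨rfl, rfl⟩⟩
    rw [this, Finset.card_insert_of_notMem (by simp [Prod.ext_iff, hab, hab.symm]),
      Finset.card_singleton]

private lemma card_filter_bipartite (E : Finset (Sym2 V)) {X Y : Finset V} (hXY : Disjoint X Y) :
    (E.filter fun e => ∃ u ∈ X, ∃ v ∈ Y, e = s(u, v)).card
      = ((X ×ˢ Y).filter fun p => s(p.1, p.2) ∈ E).card := by
  refine (Finset.card_bij (fun p _ => s(p.1, p.2)) ?_ ?_ ?_).symm
  · intro p hp
    simp only [Finset.mem_filter, Finset.mem_product] at hp ⊢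
    exact ⟨hp.2, p.1, hp.1.1, p.2, hp.1.2, rfl⟩
  · intro p hp p' hp' h
    simp only [Finset.mem_filter, Finset.mem_product] at hp hp'
    rcases Sym2.eq_iff.mp h with ⟨h1, h2⟩ | ⟨h1, h2⟩
    · exact Prod.ext_iff.mpr ⟨h1, h2⟩
    · exact absurd hp'.1.2 (Finset.disjoint_left.mp hXY (h1 ▸ hp.1.1))
  · intro e he
    simp only [Finset.mem_filter] at he
    obtain ⟨heE, u, hu, v, hv, rfl⟩ := he
    exact ⟨(u, v), Finset.mem_filter.mpr ⟨Finset.mem_product.mpr ⟨hu, hv⟩, heE⟩, rfl⟩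

end Helpers


set_option maxHeartbeats 3000000 in
/-- If `C ⊇ B` is `δ`-clean with `0 < δ ≤ 1/5`,
`|C| > (1/δ)·|B|` and `|E⁺(B, C \ B)| ≥ |E⁻(B, C \ B)|`, then the number of
negative edges with both endpoints in `C` is at most `3·m(OPT_B)`. -/
theorem stmt1 {V : Type*} [Fintype V] [DecidableEq V] (G : SignedGraph V)
    (B : Finset V) (hGB : G.GoodBadStructure B)
    (δ : ℝ) (hδ0 : 0 < δ) (hδ5 : δ ≤ 1 / 5)
    (C : Finset V) (hBC : B ⊆ C) (hclean : G.deltaClean δ B C)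
    (hsize : (1 / δ) * (B.card : ℝ) < (C.card : ℝ))
    (hpm : (G.Eminus B (C \ B)).card ≤ (G.Eplus B (C \ B)).card) :
    ((G.neg.filter (fun e => ∀ x ∈ e, x ∈ C)).card : ℝ) ≤ 3 * G.mOptB B := by
  classical
  obtain ⟨hGB1, hGB2, hGB3⟩ := hGB
  have hbn : (B.card : ℝ) ≤ δ * C.card := by
    have h := mul_lt_mul_of_pos_left hsize hδ0
    rw [show δ * (1 / δ * (B.card : ℝ)) = (B.card : ℝ) by field_simp] at h
    exact h.le
  have hC0 : 0 < C.card := by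
    by_contra h
    push_neg at h
    have h0 : C.card = 0 := Nat.le_zero.mp h
    rw [h0] at hsize
    have : (0:ℝ) ≤ δ⁻¹ * (B.card : ℝ) := by positivity
    simp at hsize
    linarith
  have hnR : (0:ℝ) < C.card := by exact_mod_cast hC0
  have hδn : δ * (C.card : ℝ) ≤ 1 / 5 * C.card := by nlinarith
  obtain ⟨v0, hv0C⟩ := Finset.card_pos.mp hC0
  -- the optimal clustering exists
  have hSne : {m : ℕ | ∃ P : Finset (Finset V), SignedGraph.IsClustering P ∧
      (∃ C' ∈ P, B ⊆ C') ∧ m = G.mistakes P}.Nonempty := by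
    refine ⟨G.mistakes {Finset.univ}, {Finset.univ}, ⟨?_, ?_, ?_⟩,
      ⟨Finset.univ, Finset.mem_singleton_self _, Finset.subset_univ _⟩, rfl⟩
    · intro D hD
      rw [Finset.mem_singleton] at hD
      subst hD
      exact ⟨v0, Finset.mem_univ _⟩
    · intro D hD D' hD' hne
      rw [Finset.mem_singleton] at hD hD'
      subst hD; subst hD'
      exact absurd rfl hne
    · intro v
      exact ⟨Finset.univ, Finset.mem_singleton_self _, Finset.mem_univ _⟩
  obtain ⟨P, hP, ⟨D₀, hD₀P, hBD₀⟩, hmval⟩ := Nat.sInf_mem hSne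
  have hmopt : G.mOptB B = G.mistakes P := hmval
  rw [hmopt]
  -- common notation
  set NC : Finset (Sym2 V) := G.neg.filter (fun e => ∀ x ∈ e, x ∈ C) with hNC
  set Nin : Finset (Sym2 V) := NC.filter (fun e => ∃ D ∈ P, ∀ x ∈ e, x ∈ D) with hNin
  set Ncr : Finset (Sym2 V) := NC.filter (fun e => ¬ ∃ D ∈ P, ∀ x ∈ e, x ∈ D) with hNcr
  have hNsplit : Nin.card + Ncr.card = NC.card :=
    Finset.card_filter_add_card_filter_not _
  have hNCneg : NC ⊆ G.neg := Finset.filter_subset _ _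
  have hNcrNC : Ncr ⊆ NC := Finset.filter_subset _ _
  -- mistakes lower bound
  have hmistake : ∀ (Pc : Finset (Sym2 V)), Pc ⊆ G.pos →
      (∀ e ∈ Pc, ∃ u v, e = s(u, v) ∧ ¬ SignedGraph.SameCluster P u v) →
      Nin.card + Pc.card ≤ G.mistakes P := by
    intro Pc hPc hcross
    have h1 : Nin ⊆ G.neg.filter (fun e => ∃ u v : V, e = s(u, v) ∧
        SignedGraph.SameCluster P u v) := by
      intro e he
      rw [hNin, Finset.mem_filter] at he
      obtain ⟨hnc, D, hD, hall⟩ := he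
      induction e using Sym2.inductionOn with
      | hf a c =>
        exact Finset.mem_filter.mpr ⟨hNCneg hnc, a, c, rfl,
          D, hD, hall a (by simp), hall c (by simp)⟩
    have h2 : Pc ⊆ G.pos.filter (fun e => ∃ u v : V, e = s(u, v) ∧
        ¬ SignedGraph.SameCluster P u v) := by
      intro e he
      exact Finset.mem_filter.mpr ⟨hPc he, hcross e he⟩
    exact add_le_add (Finset.card_le_card h1) (Finset.card_le_card h2)
  -- degree bound for good vertices
  have hnegdeg : ∀ u ∈ C, u ∉ B →
      ((C.filter (fun v => s(u, v) ∈ G.neg)).card : ℝ) ≤ δ * C.card := by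
    intro u hu hub
    have h := (hclean.1 u hu hub).1
    have heq : C.filter (fun v => s(u, v) ∈ G.neg) = G.negNbr u ∩ C := by
      ext v
      simp only [Finset.mem_filter, Finset.mem_inter, SignedGraph.negNbr,
        SignedGraph.negAdj, Finset.mem_univ, true_and]
      exact ⟨fun h => ⟨(Finset.mem_filter (p := G.negAdj u)).mpr ⟨Finset.mem_univ _, h.2⟩, h.1⟩,
        fun h => ⟨h.2, ((Finset.mem_filter (p := G.negAdj u)).mp h.1).2⟩⟩
    rw [heq]
    exact h
  -- no negative edges inside B
  have hBBpos : ∀ {a c : V}, a ∈ B → c ∈ B → s(a, c) ∉ G.neg := by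
    intro a c ha hc h
    have hac : a ≠ c := fun h' => G.neg_not_diag _ h (by simp [h'])
    exact Finset.disjoint_left.mp G.disjoint_pos_neg (hGB2 a c ha hc hac) h
  -- split of the cross negative edges
  set Ng : Finset (Sym2 V) := Ncr.filter (fun e => ∀ x ∈ e, x ∉ B) with hNg
  set Nb : Finset (Sym2 V) := Ncr.filter (fun e => ¬ ∀ x ∈ e, x ∉ B) with hNb
  have hNcrsplit : Ng.card + Nb.card = Ncr.card :=
    Finset.card_filter_add_card_filter_not _
  have hNbsub : Nb ⊆ G.Eminus B (C \ B) := by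
    intro e he
    rw [hNb, Finset.mem_filter] at he
    obtain ⟨hcr, hbad⟩ := he
    have hnc := hNcrNC hcr
    rw [hNC, Finset.mem_filter] at hnc
    obtain ⟨hneg, hC⟩ := hnc
    push_neg at hbad
    obtain ⟨x, hxe, hxB⟩ := hbad
    obtain ⟨y, rfl⟩ := Sym2.mem_iff_exists.mp hxe
    have hyC : y ∈ C := hC y (by simp)
    have hyB : y ∉ B := fun hyB => hBBpos hxB hyB hneg
    rw [SignedGraph.Eminus, Finset.mem_filter]
    exact ⟨hneg, x, hxB, y, Finset.mem_sdiff.mpr ⟨hyC, hyB⟩, rfl⟩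
  have hNble : (Nb.card : ℝ) ≤ δ * B.card * C.card := by
    calc (Nb.card : ℝ) ≤ ((G.Eminus B (C \ B)).card : ℝ) := by
          exact_mod_cast Finset.card_le_card hNbsub
    _ ≤ δ * B.card * C.card := (hclean.2 hBC).1
  -- covering bound: negative edge sets covered from a set of good vertices
  have hcover : ∀ (U : Finset V), U ⊆ C \ B → ∀ (T : Finset (Sym2 V)), T ⊆ G.neg →
      (∀ e ∈ T, ∃ x ∈ U, ∃ y ∈ C, e = s(x, y)) →
      (T.card : ℝ) ≤ U.card * (δ * C.card) := by
    intro U hU T hTneg hTcov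
    have h1 : T.card ≤ ((U ×ˢ C).filter (fun p => s(p.1, p.2) ∈ G.neg)).card := by
      apply Finset.card_le_card_of_surjOn (fun p => s(p.1, p.2))
      intro e he
      rw [Finset.mem_coe] at he
      obtain ⟨x, hx, y, hy, rfl⟩ := hTcov e he
      exact ⟨(x, y), Finset.mem_coe.mpr (Finset.mem_filter.mpr
        ⟨Finset.mem_product.mpr ⟨hx, hy⟩, hTneg he⟩), rfl⟩
    have h2 : ((U ×ˢ C).filter (fun p => s(p.1, p.2) ∈ G.neg)).card
        = ∑ u ∈ U, (C.filter (fun v => s(u, v) ∈ G.neg)).card :=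
      card_prod_filter U C (fun u v => s(u, v) ∈ G.neg)
    rw [h2] at h1
    calc (T.card : ℝ) ≤ ∑ u ∈ U, ((C.filter (fun v => s(u, v) ∈ G.neg)).card : ℝ) := by
          exact_mod_cast h1
    _ ≤ ∑ _u ∈ U, δ * C.card := Finset.sum_le_sum (fun u hu =>
          hnegdeg u (Finset.mem_sdiff.mp (hU hu)).1 (Finset.mem_sdiff.mp (hU hu)).2)
    _ = U.card * (δ * C.card) := by rw [Finset.sum_const, nsmul_eq_mul]
  -- final reduction
  have hreduce : ∀ (Pc : Finset (Sym2 V)), Pc ⊆ G.pos →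
      (∀ e ∈ Pc, ∃ u v, e = s(u, v) ∧ ¬ SignedGraph.SameCluster P u v) →
      (Ncr.card : ℝ) ≤ 3 * Pc.card →
      ((NC.card : ℝ) ≤ 3 * G.mistakes P) := by
    intro Pc h1 h2 h3
    have hm : ((Nin.card + Pc.card : ℕ) : ℝ) ≤ (G.mistakes P : ℝ) := by
      exact_mod_cast hmistake Pc h1 h2
    push_cast at hm
    have hsp : ((Nin.card : ℝ)) + (Ncr.card : ℝ) = (NC.card : ℝ) := by
      exact_mod_cast hNsplit
    linarith
  by_cases hbig : ∃ D ∈ P, (C.card : ℝ) / 2 < ((D ∩ C).card : ℝ)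
  · -- CASE 2 : some cluster covers more than half of C
    obtain ⟨Ds, hDsP, hAbig⟩ := hbig
    have hnotSC : ∀ {u v : V}, u ∉ Ds → v ∈ Ds → ¬ SignedGraph.SameCluster P u v := by
      rintro u v hu hv ⟨D, hD, huD, hvD⟩
      have hDD : D = Ds := by
        by_contra hne
        exact Finset.disjoint_left.mp (hP.2.1 D hD Ds hDsP hne) hvD hv
      exact hu (hDD ▸ huD)
    have hNcrout : ∀ e ∈ Ncr, ∃ x ∈ C \ Ds, ∃ y ∈ C, e = s(x, y) := by
      intro e he
      induction e using Sym2.inductionOn with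
      | hf a c =>
        rw [hNcr, Finset.mem_filter] at he
        obtain ⟨hnc, hnq⟩ := he
        rw [hNC, Finset.mem_filter] at hnc
        obtain ⟨hneg, hCm⟩ := hnc
        have haC : a ∈ C := hCm a (by simp)
        have hcC : c ∈ C := hCm c (by simp)
        by_cases haD : a ∈ Ds
        · by_cases hcD : c ∈ Ds
          · exact absurd ⟨Ds, hDsP, fun x hx => by
              rcases Sym2.mem_iff.mp hx with rfl | rfl <;> assumption⟩ hnq
          · exact ⟨c, Finset.mem_sdiff.mpr ⟨hcC, hcD⟩, a, haC, Sym2.eq_swap.symm⟩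
        · exact ⟨a, Finset.mem_sdiff.mpr ⟨haC, haD⟩, c, hcC, rfl⟩
    -- positive degree into a subset W of C
    have hposdegB : ∀ W : Finset V, W ⊆ C → ∀ u ∈ C, u ∉ B → u ∉ W →
        (W.card : ℝ) - δ * C.card - B.card ≤ ((W.filter (fun v => s(u, v) ∈ G.pos)).card : ℝ) := by
      intro W hWC u huC huB huW
      have hsub : W ⊆ (W.filter (fun v => s(u, v) ∈ G.pos)) ∪
          ((C.filter (fun v => s(u, v) ∈ G.neg)) ∪ B) := by
        intro v hv
        by_cases hvB : v ∈ B
        · exact Finset.mem_union_right _ (Finset.mem_union_right _ hvB)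
        · have hvu : u ≠ v := fun h => huW (h ▸ hv)
          rcases hGB1 u v huB hvB hvu with hpos | hneg
          · exact Finset.mem_union_left _ (Finset.mem_filter.mpr ⟨hv, hpos⟩)
          · exact Finset.mem_union_right _ (Finset.mem_union_left _
              (Finset.mem_filter.mpr ⟨hWC hv, hneg⟩))
      have h1 : W.card ≤ (W.filter (fun v => s(u, v) ∈ G.pos)).card +
          ((C.filter (fun v => s(u, v) ∈ G.neg)).card + B.card) :=
        (Finset.card_le_card hsub).trans ((Finset.card_union_le _ _).trans
          (Nat.add_le_add_left (Finset.card_union_le _ _) _))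
      have h1' : (W.card : ℝ) ≤ ((W.filter (fun v => s(u, v) ∈ G.pos)).card : ℝ) +
          (((C.filter (fun v => s(u, v) ∈ G.neg)).card : ℝ) + B.card) := by exact_mod_cast h1
      have h2 := hnegdeg u huC huB
      linarith
    have hposdegG : ∀ W : Finset V, W ⊆ C → (∀ v ∈ W, v ∉ B) → ∀ u ∈ C, u ∉ B → u ∉ W →
        (W.card : ℝ) - δ * C.card ≤ ((W.filter (fun v => s(u, v) ∈ G.pos)).card : ℝ) := by
      intro W hWC hWB u huC huB huW
      have hsub : W ⊆ (W.filter (fun v => s(u, v) ∈ G.pos)) ∪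
          (C.filter (fun v => s(u, v) ∈ G.neg)) := by
        intro v hv
        have hvu : u ≠ v := fun h => huW (h ▸ hv)
        rcases hGB1 u v huB (hWB v hv) hvu with hpos | hneg
        · exact Finset.mem_union_left _ (Finset.mem_filter.mpr ⟨hv, hpos⟩)
        · exact Finset.mem_union_right _ (Finset.mem_filter.mpr ⟨hWC hv, hneg⟩)
      have h1 : W.card ≤ (W.filter (fun v => s(u, v) ∈ G.pos)).card +
          (C.filter (fun v => s(u, v) ∈ G.neg)).card :=
        (Finset.card_le_card hsub).trans (Finset.card_union_le _ _)
      have h1' : (W.card : ℝ) ≤ ((W.filter (fun v => s(u, v) ∈ G.pos)).card : ℝ) +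
          ((C.filter (fun v => s(u, v) ∈ G.neg)).card : ℝ) := by exact_mod_cast h1
      have h2 := hnegdeg u huC huB
      linarith
    -- lower bound for bipartite positive edge counts
    have hsumlow : ∀ (U W : Finset V) (c : ℝ), Disjoint U W →
        (∀ u ∈ U, c ≤ ((W.filter (fun v => s(u, v) ∈ G.pos)).card : ℝ)) →
        (U.card : ℝ) * c ≤ ((G.pos.filter (fun e => ∃ u ∈ U, ∃ v ∈ W, e = s(u, v))).card : ℝ) := by
      intro U W c hUW hc
      have hb1 : (G.pos.filter (fun e => ∃ u ∈ U, ∃ v ∈ W, e = s(u, v))).card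
          = ((U ×ˢ W).filter (fun p => s(p.1, p.2) ∈ G.pos)).card :=
        card_filter_bipartite G.pos hUW
      have hb2 : ((U ×ˢ W).filter (fun p => s(p.1, p.2) ∈ G.pos)).card
          = ∑ u ∈ U, (W.filter (fun v => s(u, v) ∈ G.pos)).card :=
        card_prod_filter U W (fun u v => s(u, v) ∈ G.pos)
      rw [hb1, hb2]
      calc (U.card : ℝ) * c = ∑ _u ∈ U, c := by rw [Finset.sum_const, nsmul_eq_mul]
      _ ≤ ∑ u ∈ U, ((W.filter (fun v => s(u, v) ∈ G.pos)).card : ℝ) := Finset.sum_le_sum hc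
      _ = ((∑ u ∈ U, (W.filter (fun v => s(u, v) ∈ G.pos)).card : ℕ) : ℝ) := by push_cast; rfl
    by_cases hBDs : B ⊆ Ds
    · -- CASE 2a : B lies in the big cluster
      have hOutgood : C \ Ds ⊆ C \ B := by
        intro v hv
        rw [Finset.mem_sdiff] at hv ⊢
        exact ⟨hv.1, fun hvB => hv.2 (hBDs hvB)⟩
      have hNcrle : (Ncr.card : ℝ) ≤ ((C \ Ds).card) * (δ * C.card) :=
        hcover (C \ Ds) hOutgood Ncr (fun e he => hNCneg (hNcrNC he)) hNcrout
      have hdisjOA : Disjoint (C \ Ds) (Ds ∩ C) := by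
        rw [Finset.disjoint_left]
        intro v hv hv2
        exact (Finset.mem_sdiff.mp hv).2 (Finset.mem_inter.mp hv2).1
      have hposlow : ∀ u ∈ C \ Ds, ((Ds ∩ C).card : ℝ) - δ * C.card - B.card ≤
          (((Ds ∩ C).filter (fun v => s(u, v) ∈ G.pos)).card : ℝ) := by
        intro u hu
        obtain ⟨huC, huDs⟩ := Finset.mem_sdiff.mp hu
        exact hposdegB (Ds ∩ C) Finset.inter_subset_right u huC
          (fun hB => huDs (hBDs hB)) (fun hW => huDs (Finset.mem_inter.mp hW).1)
      have hPClow : ((C \ Ds).card : ℝ) * (((Ds ∩ C).card : ℝ) - δ * C.card - B.card) ≤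
          ((G.pos.filter (fun e => ∃ u ∈ C \ Ds, ∃ v ∈ Ds ∩ C, e = s(u, v))).card : ℝ) :=
        hsumlow (C \ Ds) (Ds ∩ C) _ hdisjOA hposlow
      refine hreduce (G.pos.filter (fun e => ∃ u ∈ C \ Ds, ∃ v ∈ Ds ∩ C, e = s(u, v)))
        (Finset.filter_subset _ _) ?_ ?_
      · intro e he
        obtain ⟨-, u, hu, v, hv, rfl⟩ := Finset.mem_filter.mp he
        exact ⟨u, v, rfl, hnotSC (Finset.mem_sdiff.mp hu).2 (Finset.mem_inter.mp hv).1⟩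
      · -- Ncr ≤ 3 * PC
        have ho : (0:ℝ) ≤ ((C \ Ds).card : ℝ) := Nat.cast_nonneg _
        have hscal : δ * C.card ≤ 3 * (((Ds ∩ C).card : ℝ) - δ * C.card - B.card) := by
          linarith
        have := mul_le_mul_of_nonneg_left hscal ho
        nlinarith
    · -- CASE 2b : B lies in another cluster
      have hBne : ∃ x ∈ B, x ∉ Ds := by rwa [Finset.not_subset] at hBDs
      obtain ⟨b₀, hb₀B, hb₀Ds⟩ := hBne
      have hD₀ne : D₀ ≠ Ds := fun h => hb₀Ds (h ▸ hBD₀ hb₀B)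
      have hdisj₀ : Disjoint D₀ Ds := hP.2.1 D₀ hD₀P Ds hDsP hD₀ne
      have hBnotDs : ∀ x ∈ B, x ∉ Ds := fun x hx => Finset.disjoint_left.mp hdisj₀ (hBD₀ hx)
      have hAnoB : ∀ v ∈ Ds ∩ C, v ∉ B := fun v hv hvB =>
        hBnotDs v hvB (Finset.mem_inter.mp hv).1
      have hOutGgood : (C \ Ds) \ B ⊆ C \ B := by
        intro v hv
        rw [Finset.mem_sdiff] at hv ⊢
        exact ⟨(Finset.mem_sdiff.mp hv.1).1, hv.2⟩
      have hNgcov : ∀ e ∈ Ng, ∃ x ∈ (C \ Ds) \ B, ∃ y ∈ C, e = s(x, y) := by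
        intro e he
        rw [hNg, Finset.mem_filter] at he
        obtain ⟨hcr, hgood⟩ := he
        obtain ⟨x, hx, y, hy, rfl⟩ := hNcrout _ hcr
        exact ⟨x, Finset.mem_sdiff.mpr ⟨hx, hgood x (by simp)⟩, y, hy, rfl⟩
      have hNgle : (Ng.card : ℝ) ≤ (((C \ Ds) \ B).card) * (δ * C.card) :=
        hcover ((C \ Ds) \ B) hOutGgood Ng
          (fun e he => hNCneg (hNcrNC (Finset.filter_subset _ _ he))) hNgcov
      -- split of the positive edges from B
      have hEsplit : ((G.Eplus B (C \ B)).card : ℝ) ≤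
          (B.card : ℝ) * (((C \ Ds) \ B).card) +
          ((G.pos.filter (fun e => ∃ u ∈ B, ∃ v ∈ C \ D₀, e = s(u, v))).card : ℝ) := by
        have hsub : G.Eplus B (C \ B) ⊆
            (G.pos.filter (fun e => ∃ u ∈ B, ∃ v ∈ (D₀ ∩ C) \ B, e = s(u, v))) ∪
            (G.pos.filter (fun e => ∃ u ∈ B, ∃ v ∈ C \ D₀, e = s(u, v))) := by
          intro e he
          rw [SignedGraph.Eplus, Finset.mem_filter] at he
          obtain ⟨hpos, u, hu, v, hv, rfl⟩ := he
          obtain ⟨hvC, hvB⟩ := Finset.mem_sdiff.mp hv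
          by_cases hvD : v ∈ D₀
          · exact Finset.mem_union_left _ (Finset.mem_filter.mpr ⟨hpos, u, hu, v,
              Finset.mem_sdiff.mpr ⟨Finset.mem_inter.mpr ⟨hvD, hvC⟩, hvB⟩, rfl⟩)
          · exact Finset.mem_union_right _ (Finset.mem_filter.mpr ⟨hpos, u, hu, v,
              Finset.mem_sdiff.mpr ⟨hvC, hvD⟩, rfl⟩)
        have h1 := (Finset.card_le_card hsub).trans (Finset.card_union_le _ _)
        have hdisjB : Disjoint B ((D₀ ∩ C) \ B) := by
          rw [Finset.disjoint_left]
          intro x hx hx2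
          exact (Finset.mem_sdiff.mp hx2).2 hx
        have h2 : (G.pos.filter (fun e => ∃ u ∈ B, ∃ v ∈ (D₀ ∩ C) \ B, e = s(u, v))).card
            = ((B ×ˢ ((D₀ ∩ C) \ B)).filter (fun p => s(p.1, p.2) ∈ G.pos)).card :=
          card_filter_bipartite G.pos hdisjB
        have h3 : ((B ×ˢ ((D₀ ∩ C) \ B)).filter (fun p => s(p.1, p.2) ∈ G.pos)).card
            ≤ B.card * ((D₀ ∩ C) \ B).card := by
          calc ((B ×ˢ ((D₀ ∩ C) \ B)).filter (fun p => s(p.1, p.2) ∈ G.pos)).card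
              ≤ (B ×ˢ ((D₀ ∩ C) \ B)).card := Finset.card_filter_le _ _
          _ = B.card * ((D₀ ∩ C) \ B).card := Finset.card_product _ _
        have h4 : ((D₀ ∩ C) \ B).card ≤ ((C \ Ds) \ B).card := by
          apply Finset.card_le_card
          intro v hv
          obtain ⟨hvDC, hvB⟩ := Finset.mem_sdiff.mp hv
          obtain ⟨hvD, hvC⟩ := Finset.mem_inter.mp hvDC
          exact Finset.mem_sdiff.mpr ⟨Finset.mem_sdiff.mpr ⟨hvC,
            Finset.disjoint_left.mp hdisj₀ hvD⟩, hvB⟩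
        have h5 : (G.pos.filter (fun e => ∃ u ∈ B, ∃ v ∈ (D₀ ∩ C) \ B, e = s(u, v))).card
            ≤ B.card * ((C \ Ds) \ B).card := by
          rw [h2]
          exact h3.trans (Nat.mul_le_mul_left _ h4)
        have h6 : (G.Eplus B (C \ B)).card ≤ B.card * ((C \ Ds) \ B).card +
            (G.pos.filter (fun e => ∃ u ∈ B, ∃ v ∈ C \ D₀, e = s(u, v))).card :=
          h1.trans (Nat.add_le_add_right h5 _)
        exact_mod_cast h6
      have hNbK : (Nb.card : ℝ) ≤ (B.card : ℝ) * (((C \ Ds) \ B).card) +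
          ((G.pos.filter (fun e => ∃ u ∈ B, ∃ v ∈ C \ D₀, e = s(u, v))).card : ℝ) := by
        have h1 : (Nb.card : ℝ) ≤ ((G.Eminus B (C \ B)).card : ℝ) := by
          exact_mod_cast Finset.card_le_card hNbsub
        have h2 : ((G.Eminus B (C \ B)).card : ℝ) ≤ ((G.Eplus B (C \ B)).card : ℝ) := by
          exact_mod_cast hpm
        linarith
      -- positive cross edges from OutG to the big piece
      have hdisjOA : Disjoint ((C \ Ds) \ B) (Ds ∩ C) := by
        rw [Finset.disjoint_left]
        intro v hv hv2
        exact (Finset.mem_sdiff.mp (Finset.mem_sdiff.mp hv).1).2 (Finset.mem_inter.mp hv2).1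
      have hposlow : ∀ u ∈ (C \ Ds) \ B, ((Ds ∩ C).card : ℝ) - δ * C.card ≤
          (((Ds ∩ C).filter (fun v => s(u, v) ∈ G.pos)).card : ℝ) := by
        intro u hu
        obtain ⟨hu1, huB⟩ := Finset.mem_sdiff.mp hu
        obtain ⟨huC, huDs⟩ := Finset.mem_sdiff.mp hu1
        exact hposdegG (Ds ∩ C) Finset.inter_subset_right hAnoB u huC huB
          (fun hW => huDs (Finset.mem_inter.mp hW).1)
      have hPClow : (((C \ Ds) \ B).card : ℝ) * (((Ds ∩ C).card : ℝ) - δ * C.card) ≤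
          ((G.pos.filter (fun e => ∃ u ∈ (C \ Ds) \ B, ∃ v ∈ Ds ∩ C, e = s(u, v))).card : ℝ) :=
        hsumlow ((C \ Ds) \ B) (Ds ∩ C) _ hdisjOA hposlow
      -- the combined positive mistake set
      have hPCsplit : (G.pos.filter (fun e => (∃ u ∈ (C \ Ds) \ B, ∃ v ∈ Ds ∩ C, e = s(u, v)) ∨
            (∃ u ∈ B, ∃ v ∈ C \ D₀, e = s(u, v)))).card
          = (G.pos.filter (fun e => ∃ u ∈ (C \ Ds) \ B, ∃ v ∈ Ds ∩ C, e = s(u, v))).card +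
            (G.pos.filter (fun e => ∃ u ∈ B, ∃ v ∈ C \ D₀, e = s(u, v))).card := by
        rw [Finset.filter_or]
        apply Finset.card_union_of_disjoint
        rw [Finset.disjoint_left]
        intro e he1 he2
        rw [Finset.mem_filter] at he1 he2
        obtain ⟨-, u, hu, v, hv, rfl⟩ := he1
        obtain ⟨-, u', hu', v', hv', he⟩ := he2
        have hmem : u' ∈ s(u, v) := by rw [he]; simp
        rcases Sym2.mem_iff.mp hmem with rfl | rfl
        · exact (Finset.mem_sdiff.mp hu).2 hu'
        · exact hAnoB _ hv hu'
      refine hreduce (G.pos.filter (fun e => (∃ u ∈ (C \ Ds) \ B, ∃ v ∈ Ds ∩ C, e = s(u, v)) ∨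
            (∃ u ∈ B, ∃ v ∈ C \ D₀, e = s(u, v)))) (Finset.filter_subset _ _) ?_ ?_
      · intro e he
        obtain ⟨-, hor⟩ := Finset.mem_filter.mp he
        rcases hor with ⟨u, hu, v, hv, rfl⟩ | ⟨u, hu, v, hv, rfl⟩
        · exact ⟨u, v, rfl, hnotSC (Finset.mem_sdiff.mp (Finset.mem_sdiff.mp hu).1).2
            (Finset.mem_inter.mp hv).1⟩
        · refine ⟨u, v, rfl, ?_⟩
          rintro ⟨D, hD, huD, hvD⟩
          have hDD : D = D₀ := by
            by_contra hne
            exact Finset.disjoint_left.mp (hP.2.1 D hD D₀ hD₀P hne) huD (hBD₀ hu)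
          exact (Finset.mem_sdiff.mp hv).2 (hDD ▸ hvD)
      · -- Ncr ≤ 3 * PC
        have hcast : (Ng.card : ℝ) + Nb.card = Ncr.card := by exact_mod_cast hNcrsplit
        have hPCcast : ((G.pos.filter (fun e => (∃ u ∈ (C \ Ds) \ B, ∃ v ∈ Ds ∩ C, e = s(u, v)) ∨
            (∃ u ∈ B, ∃ v ∈ C \ D₀, e = s(u, v)))).card : ℝ)
            = ((G.pos.filter (fun e => ∃ u ∈ (C \ Ds) \ B, ∃ v ∈ Ds ∩ C, e = s(u, v))).card : ℝ) +
              ((G.pos.filter (fun e => ∃ u ∈ B, ∃ v ∈ C \ D₀, e = s(u, v))).card : ℝ) := by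
          exact_mod_cast hPCsplit
        have hg0 : (0:ℝ) ≤ (((C \ Ds) \ B).card : ℝ) := Nat.cast_nonneg _
        have hK0 : (0:ℝ) ≤ ((G.pos.filter (fun e => ∃ u ∈ B, ∃ v ∈ C \ D₀, e = s(u, v))).card : ℝ) :=
          Nat.cast_nonneg _
        have hscal : δ * C.card + B.card ≤ 3 * (((Ds ∩ C).card : ℝ) - δ * C.card) := by
          linarith
        have := mul_le_mul_of_nonneg_left hscal hg0
        nlinarith
  · -- CASE 1 : all pieces are at most half of C
    push_neg at hbig
    have hNg2 : 2 * (Ng.card : ℝ) ≤ ((C \ B).card) * (δ * C.card) := by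
      have hnd : ∀ e ∈ Ng, ¬ e.IsDiag := fun e he =>
        G.neg_not_diag e (hNCneg (hNcrNC (Finset.filter_subset _ _ he)))
      have h1 : ((Finset.univ ×ˢ Finset.univ).filter
          (fun p : V × V => s(p.1, p.2) ∈ Ng)).card = 2 * Ng.card := two_mul_card_sym2 Ng hnd
      have h2 : ((Finset.univ ×ˢ Finset.univ).filter (fun p : V × V => s(p.1, p.2) ∈ Ng))
          ⊆ ((C \ B) ×ˢ C).filter (fun p => s(p.1, p.2) ∈ G.neg) := by
        intro p hp
        rw [Finset.mem_filter] at hp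
        have hm := hp.2
        rw [hNg, Finset.mem_filter] at hm
        obtain ⟨hcr, hgood⟩ := hm
        have hnc := hNcrNC hcr
        rw [hNC, Finset.mem_filter] at hnc
        refine Finset.mem_filter.mpr ⟨Finset.mem_product.mpr ⟨Finset.mem_sdiff.mpr
          ⟨hnc.2 p.1 (Sym2.mem_mk_left p.1 p.2), hgood p.1 (Sym2.mem_mk_left p.1 p.2)⟩,
            hnc.2 p.2 (Sym2.mem_mk_right p.1 p.2)⟩, hnc.1⟩
      have h3 : (((C \ B) ×ˢ C).filter (fun p => s(p.1, p.2) ∈ G.neg)).card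
          = ∑ u ∈ C \ B, (C.filter (fun v => s(u, v) ∈ G.neg)).card :=
        card_prod_filter _ _ (fun u v => s(u, v) ∈ G.neg)
      have h4 := Finset.card_le_card h2
      rw [h1, h3] at h4
      calc 2 * (Ng.card : ℝ) = ((2 * Ng.card : ℕ) : ℝ) := by push_cast; ring
      _ ≤ ((∑ u ∈ C \ B, (C.filter (fun v => s(u, v) ∈ G.neg)).card : ℕ) : ℝ) := by
          exact_mod_cast h4
      _ = ∑ u ∈ C \ B, ((C.filter (fun v => s(u, v) ∈ G.neg)).card : ℝ) := by push_cast; rfl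
      _ ≤ ∑ _u ∈ C \ B, δ * C.card := Finset.sum_le_sum (fun u hu =>
          hnegdeg u (Finset.mem_sdiff.mp hu).1 (Finset.mem_sdiff.mp hu).2)
      _ = ((C \ B).card) * (δ * C.card) := by rw [Finset.sum_const, nsmul_eq_mul]
    have hPC2 : ((C \ B).card : ℝ) * ((C.card : ℝ) / 2 - δ * C.card - B.card) ≤
        2 * (((G.pos.filter (fun e => ∀ x ∈ e, x ∈ C)).filter
          (fun e => ¬ ∃ D ∈ P, ∀ x ∈ e, x ∈ D)).card : ℝ) := by
      have hnd : ∀ e ∈ (G.pos.filter (fun e => ∀ x ∈ e, x ∈ C)).filter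
          (fun e => ¬ ∃ D ∈ P, ∀ x ∈ e, x ∈ D), ¬ e.IsDiag := fun e he =>
        G.pos_not_diag e (Finset.filter_subset _ _ (Finset.filter_subset _ _ he))
      have h1 := two_mul_card_sym2 _ hnd
      have h2 : ((C \ B) ×ˢ C).filter
          (fun p => s(p.1, p.2) ∈ G.pos ∧ ¬ SignedGraph.SameCluster P p.1 p.2)
          ⊆ (Finset.univ ×ˢ Finset.univ).filter (fun p : V × V =>
            s(p.1, p.2) ∈ (G.pos.filter (fun e => ∀ x ∈ e, x ∈ C)).filter
              (fun e => ¬ ∃ D ∈ P, ∀ x ∈ e, x ∈ D)) := by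
        intro p hp
        rw [Finset.mem_filter, Finset.mem_product] at hp
        obtain ⟨⟨hp1, hp2⟩, hpos, hnsc⟩ := hp
        have hp1C := (Finset.mem_sdiff.mp hp1).1
        refine Finset.mem_filter.mpr ⟨Finset.mem_product.mpr
          ⟨Finset.mem_univ _, Finset.mem_univ _⟩, ?_⟩
        rw [Finset.mem_filter, Finset.mem_filter]
        refine ⟨⟨hpos, ?_⟩, ?_⟩
        · intro x hx
          rcases Sym2.mem_iff.mp hx with rfl | rfl <;> assumption
        · rintro ⟨D, hD, hall⟩
          exact hnsc ⟨D, hD, hall p.1 (Sym2.mem_mk_left p.1 p.2), hall p.2 (Sym2.mem_mk_right p.1 p.2)⟩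
      have h3 : (((C \ B) ×ˢ C).filter
          (fun p => s(p.1, p.2) ∈ G.pos ∧ ¬ SignedGraph.SameCluster P p.1 p.2)).card
          = ∑ u ∈ C \ B, (C.filter
            (fun v => s(u, v) ∈ G.pos ∧ ¬ SignedGraph.SameCluster P u v)).card :=
        card_prod_filter _ _ (fun u v => s(u, v) ∈ G.pos ∧ ¬ SignedGraph.SameCluster P u v)
      have h4 := Finset.card_le_card h2
      rw [h1, h3] at h4
      have h5 : ∀ u ∈ C \ B, (C.card : ℝ) / 2 - δ * C.card - B.card ≤
          ((C.filter (fun v => s(u, v) ∈ G.pos ∧ ¬ SignedGraph.SameCluster P u v)).card : ℝ) := by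
        intro u hu
        obtain ⟨huC, huB⟩ := Finset.mem_sdiff.mp hu
        obtain ⟨Du, hDuP, huDu⟩ := hP.2.2 u
        have hDuC : ((Du ∩ C).card : ℝ) ≤ (C.card : ℝ) / 2 := hbig Du hDuP
        have hsub1 : C.erase u ⊆ (C.filter (fun v => s(u, v) ∈ G.pos)) ∪
            ((C.filter (fun v => s(u, v) ∈ G.neg)) ∪ B) := by
          intro v hv
          obtain ⟨hvu, hvC⟩ := Finset.mem_erase.mp hv
          by_cases hvB : v ∈ B
          · exact Finset.mem_union_right _ (Finset.mem_union_right _ hvB)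
          · rcases hGB1 u v huB hvB (fun h => hvu h.symm) with hpos | hneg
            · exact Finset.mem_union_left _ (Finset.mem_filter.mpr ⟨hvC, hpos⟩)
            · exact Finset.mem_union_right _ (Finset.mem_union_left _
                (Finset.mem_filter.mpr ⟨hvC, hneg⟩))
        have hc1 : C.card - 1 ≤ (C.filter (fun v => s(u, v) ∈ G.pos)).card +
            ((C.filter (fun v => s(u, v) ∈ G.neg)).card + B.card) := by
          have h6 := (Finset.card_le_card hsub1).trans ((Finset.card_union_le _ _).trans
            (Nat.add_le_add_left (Finset.card_union_le _ _) _))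
          rwa [Finset.card_erase_of_mem huC] at h6
        have hc1' : (C.card : ℝ) - 1 ≤ ((C.filter (fun v => s(u, v) ∈ G.pos)).card : ℝ) +
            (((C.filter (fun v => s(u, v) ∈ G.neg)).card : ℝ) + B.card) := by
          have h7 : ((C.card - 1 : ℕ) : ℝ) = (C.card : ℝ) - 1 := by
            rw [Nat.cast_sub hC0]
            simp
          rw [← h7]
          exact_mod_cast hc1
        have hsub2 : C.filter (fun v => s(u, v) ∈ G.pos) ⊆
            (C.filter (fun v => s(u, v) ∈ G.pos ∧ ¬ SignedGraph.SameCluster P u v)) ∪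
              ((Du ∩ C).erase u) := by
          intro v hv
          obtain ⟨hvC, hvpos⟩ := Finset.mem_filter.mp hv
          by_cases hsc : SignedGraph.SameCluster P u v
          · obtain ⟨D, hD, huD, hvD⟩ := hsc
            have hDD : D = Du := by
              by_contra hne
              exact Finset.disjoint_left.mp (hP.2.1 D hD Du hDuP hne) huD huDu
            have hvu : v ≠ u := fun h => G.pos_not_diag _ hvpos (by simp [h])
            exact Finset.mem_union_right _ (Finset.mem_erase.mpr
              ⟨hvu, Finset.mem_inter.mpr ⟨hDD ▸ hvD, hvC⟩⟩)
          · exact Finset.mem_union_left _ (Finset.mem_filter.mpr ⟨hvC, hvpos, hsc⟩)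
        have huDuC : u ∈ Du ∩ C := Finset.mem_inter.mpr ⟨huDu, huC⟩
        have hc2 : (C.filter (fun v => s(u, v) ∈ G.pos)).card ≤
            (C.filter (fun v => s(u, v) ∈ G.pos ∧ ¬ SignedGraph.SameCluster P u v)).card +
              ((Du ∩ C).card - 1) := by
          have h8 := (Finset.card_le_card hsub2).trans (Finset.card_union_le _ _)
          rwa [Finset.card_erase_of_mem huDuC] at h8
        have hDuC0 : 1 ≤ (Du ∩ C).card := Finset.card_pos.mpr ⟨u, huDuC⟩
        have hc2' : ((C.filter (fun v => s(u, v) ∈ G.pos)).card : ℝ) ≤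
            ((C.filter (fun v => s(u, v) ∈ G.pos ∧ ¬ SignedGraph.SameCluster P u v)).card : ℝ) +
              (((Du ∩ C).card : ℝ) - 1) := by
          have h9 : (((Du ∩ C).card - 1 : ℕ) : ℝ) = ((Du ∩ C).card : ℝ) - 1 := by
            rw [Nat.cast_sub hDuC0]
            simp
          rw [← h9]
          exact_mod_cast hc2
        have hnd2 := hnegdeg u huC huB
        linarith
      calc ((C \ B).card : ℝ) * ((C.card : ℝ) / 2 - δ * C.card - B.card)
          = ∑ _u ∈ C \ B, ((C.card : ℝ) / 2 - δ * C.card - B.card) := by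
            rw [Finset.sum_const, nsmul_eq_mul]
      _ ≤ ∑ u ∈ C \ B, ((C.filter
            (fun v => s(u, v) ∈ G.pos ∧ ¬ SignedGraph.SameCluster P u v)).card : ℝ) :=
          Finset.sum_le_sum h5
      _ = ((∑ u ∈ C \ B, (C.filter
            (fun v => s(u, v) ∈ G.pos ∧ ¬ SignedGraph.SameCluster P u v)).card : ℕ) : ℝ) := by
          push_cast; rfl
      _ ≤ 2 * (((G.pos.filter (fun e => ∀ x ∈ e, x ∈ C)).filter
          (fun e => ¬ ∃ D ∈ P, ∀ x ∈ e, x ∈ D)).card : ℝ) := by exact_mod_cast h4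
    have hsdb : ((C \ B).card : ℝ) = (C.card : ℝ) - B.card := by
      rw [Finset.card_sdiff_of_subset hBC]
      exact_mod_cast Nat.cast_sub (Finset.card_le_card hBC)
    refine hreduce ((G.pos.filter (fun e => ∀ x ∈ e, x ∈ C)).filter
        (fun e => ¬ ∃ D ∈ P, ∀ x ∈ e, x ∈ D))
      ((Finset.filter_subset _ _).trans (Finset.filter_subset _ _)) ?_ ?_
    · intro e he
      induction e using Sym2.inductionOn with
      | hf a c =>
        obtain ⟨-, hnq⟩ := Finset.mem_filter.mp he
        refine ⟨a, c, rfl, ?_⟩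
        rintro ⟨D, hD, haD, hcD⟩
        exact hnq ⟨D, hD, fun x hx => by rcases Sym2.mem_iff.mp hx with rfl | rfl <;> assumption⟩
    · have hcast : (Ng.card : ℝ) + Nb.card = Ncr.card := by exact_mod_cast hNcrsplit
      have e1 : (0:ℝ) ≤ δ * C.card - B.card := by linarith
      have e2 : (0:ℝ) ≤ 7/2 * C.card - 3 * B.card := by nlinarith
      have e3 : (0:ℝ) ≤ 1/5 - δ := by linarith
      have e4 : (0:ℝ) ≤ 15/2 * (C.card : ℝ) * C.card - 5 * C.card * B.card := by nlinarith
      rw [hsdb] at hNg2 hPC2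
      nlinarith [mul_nonneg e1 e2, mul_nonneg e3 e4]
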